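/- For every m ≥ 3, the 3-strand configuration graph of Θ_m is connected (i.e., the configuration complex Conf_3(Θ_m) is connected). -/

import Mathlib

/-- The subdivided generalized theta graph `Θ_m`: vertices `inl i` (the numbered
vertices `1,…,m`) and `inr 0 = a`, `inr 1 = b`; edges exactly `inl i — inr t`. -/
def theta (m : ℕ) : SimpleGraph (Fin m ⊕ Fin 2) where
  Adj x y := x.isLeft ≠ y.isLeft
  symm := ⟨fun _ _ h => h.symm⟩
  loopless := ⟨fun _ h => h rfl⟩

instance (m : ℕ) : DecidableRel (theta m).Adj :=
  fun x y => inferInstanceAs (Decidable (x.isLeft ≠ y.isLeft))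

/-- The 3-strand configuration graph of a graph `G`: vertices are 3-element
subsets of the vertex set; `S` is adjacent to `T` iff `|S ∩ T| = 2` and the
unique vertex of `S \ T` is adjacent in `G` to the unique vertex of `T \ S`. -/
def conf3 {V : Type*} [DecidableEq V] (G : SimpleGraph V) :
    SimpleGraph {S : Finset V // S.card = 3} where
  Adj S T := (S.1 ∩ T.1).card = 2 ∧
    ∃ u v, u ∈ S.1 \ T.1 ∧ v ∈ T.1 \ S.1 ∧ G.Adj u v
  symm := by
    refine ⟨?_⟩
    rintro S T ⟨hc, u, v, hu, hv, ha⟩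
    exact ⟨by rwa [Finset.inter_comm], v, u, hv, hu, ha.symm⟩
  loopless := by
    refine ⟨?_⟩
    rintro S ⟨hc, u, v, hu, _⟩
    simp at hu

instance {V : Type*} [DecidableEq V] [Fintype V] (G : SimpleGraph V)
    [DecidableRel G.Adj] : DecidableRel (conf3 G).Adj :=
  fun _ _ => inferInstanceAs (Decidable (_ ∧ _))

namespace Conf3Aux

variable {V : Type*} [DecidableEq V] {G : SimpleGraph V}

lemma card_move {S : Finset V} (hS : S.card = 3) {u v : V} (hu : u ∈ S) (hv : v ∉ S) :
    (insert v (S.erase u)).card = 3 := by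
  rw [Finset.card_insert_of_notMem (fun h => hv (Finset.mem_of_mem_erase h)),
    Finset.card_erase_of_mem hu, hS]

lemma move {S : Finset V} (hS : S.card = 3) {u v : V} (hu : u ∈ S) (hv : v ∉ S)
    (ha : G.Adj u v) :
    (conf3 G).Adj ⟨S, hS⟩ ⟨insert v (S.erase u), card_move hS hu hv⟩ := by
  refine ⟨?_, u, v, ?_, ?_, ha⟩
  · have h : S ∩ insert v (S.erase u) = S.erase u := by
      ext x
      simp only [Finset.mem_inter, Finset.mem_insert, Finset.mem_erase]
      constructor
      · rintro ⟨hxS, rfl | hx⟩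
        · exact absurd hxS hv
        · exact hx
      · rintro ⟨hxu, hxS⟩; exact ⟨hxS, Or.inr ⟨hxu, hxS⟩⟩
    rw [h, Finset.card_erase_of_mem hu, hS]
  · simp only [Finset.mem_sdiff, Finset.mem_insert, Finset.mem_erase, not_or]
    refine ⟨hu, fun h => (h ▸ hv) hu, fun h => h.1 rfl⟩
  · exact Finset.mem_sdiff.mpr ⟨Finset.mem_insert_self _ _, hv⟩

lemma two_step {S : Finset V} (hS : S.card = 3) {u v r : V} (hu : u ∈ S) (hv : v ∉ S)
    (hr : r ∉ S) (hrv : r ≠ v) (h1 : G.Adj u r) (h2 : G.Adj r v) :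
    (conf3 G).Reachable ⟨S, hS⟩ ⟨insert v (S.erase u), card_move hS hu hv⟩ := by
  have step1 := move hS hu hr h1
  have hrT : r ∈ insert r (S.erase u) := Finset.mem_insert_self _ _
  have hvT : v ∉ insert r (S.erase u) := by
    simp only [Finset.mem_insert, Finset.mem_erase]
    rintro (rfl | ⟨_, h⟩)
    · exact hrv rfl
    · exact hv h
  have step2 := move (card_move hS hu hr) hrT hvT h2
  have hTe : (⟨insert v ((insert r (S.erase u)).erase r),
        card_move (card_move hS hu hr) hrT hvT⟩ : {S : Finset V // S.card = 3}) =
      ⟨insert v (S.erase u), card_move hS hu hv⟩ := by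
    apply Subtype.ext
    show insert v ((insert r (S.erase u)).erase r) = insert v (S.erase u)
    rw [Finset.erase_insert (fun h => hr (Finset.mem_of_mem_erase h))]
  exact step1.reachable.trans (hTe ▸ step2.reachable)

variable (m : ℕ)

def Cset (hm : 3 ≤ m) : Finset (Fin m ⊕ Fin 2) :=
  {Sum.inl ⟨0, by omega⟩, Sum.inl ⟨1, by omega⟩, Sum.inl ⟨2, by omega⟩}

lemma Cset_card (hm : 3 ≤ m) : (Cset m hm).card = 3 := by
  rw [Cset, Finset.card_insert_of_notMem (by simp [Fin.ext_iff]),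
    Finset.card_insert_of_notMem (by simp [Fin.ext_iff]), Finset.card_singleton]

lemma Cset_left (hm : 3 ≤ m) : ∀ x ∈ Cset m hm, x.isLeft = true := by
  intro x hx
  rw [Cset] at hx
  simp only [Finset.mem_insert, Finset.mem_singleton] at hx
  rcases hx with rfl | rfl | rfl <;> rfl

lemma left_to_canonical (hm : 3 ≤ m) :
    ∀ n (S : Finset (Fin m ⊕ Fin 2)) (hS : S.card = 3)
      (hleft : ∀ x ∈ S, x.isLeft = true) (hn : (Cset m hm \ S).card = n),
      (conf3 (theta m)).Reachable ⟨S, hS⟩ ⟨Cset m hm, Cset_card m hm⟩ := by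
  intro n
  induction n with
  | zero =>
    intro S hS hleft hn
    have hsub : Cset m hm ⊆ S := by
      rwa [← Finset.sdiff_eq_empty_iff_subset, ← Finset.card_eq_zero]
    have hEq : S = Cset m hm :=
      (Finset.eq_of_subset_of_card_le hsub (by rw [hS, Cset_card])).symm
    subst hEq
    exact SimpleGraph.Reachable.refl _
  | succ n ih =>
    intro S hS hleft hn
    obtain ⟨v, hv⟩ : (Cset m hm \ S).Nonempty := by
      rw [← Finset.card_pos, hn]; omega
    rw [Finset.mem_sdiff] at hv
    have hCc := Cset_card m hm
    have h1 := Finset.card_sdiff_add_card_inter S (Cset m hm)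
    have h2 := Finset.card_sdiff_add_card_inter (Cset m hm) S
    rw [Finset.inter_comm] at h2
    obtain ⟨u, hu⟩ : (S \ Cset m hm).Nonempty := by
      rw [← Finset.card_pos]; omega
    rw [Finset.mem_sdiff] at hu
    have hrS : (Sum.inr 0 : Fin m ⊕ Fin 2) ∉ S := fun h => by simpa using hleft _ h
    have hvleft : v.isLeft = true := Cset_left m hm v hv.1
    have hrv : (Sum.inr 0 : Fin m ⊕ Fin 2) ≠ v := fun h => by
      rw [← h] at hvleft; simp at hvleft
    have hadj1 : (theta m).Adj u (Sum.inr 0) := by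
      have := hleft u hu.1
      simp [theta, this]
    have hadj2 : (theta m).Adj (Sum.inr 0) v := by
      simp [theta, hvleft]
    have reach1 := two_step hS hu.1 hv.2 hrS hrv hadj1 hadj2
    have hleft' : ∀ x ∈ insert v (S.erase u), x.isLeft = true := by
      intro x hx
      rcases Finset.mem_insert.mp hx with rfl | hx
      · exact hvleft
      · exact hleft x (Finset.mem_of_mem_erase hx)
    have hset : Cset m hm \ insert v (S.erase u) = (Cset m hm \ S).erase v := by
      ext x
      simp only [Finset.mem_sdiff, Finset.mem_insert, Finset.mem_erase, not_or]
      constructor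
      · rintro ⟨hxC, hxv, hxe⟩
        refine ⟨hxv, hxC, fun hxS => hxe ⟨fun h => hu.2 (h ▸ hxC), hxS⟩⟩
      · rintro ⟨hxv, hxC, hxS⟩
        exact ⟨hxC, hxv, fun h => hxS h.2⟩
    have hn' : (Cset m hm \ insert v (S.erase u)).card = n := by
      rw [hset, Finset.card_erase_of_mem (Finset.mem_sdiff.mpr hv), hn]
      omega
    exact reach1.trans (ih _ (card_move hS hu.1 hv.2) hleft' hn')

lemma to_canonical (hm : 3 ≤ m) :
    ∀ n (S : Finset (Fin m ⊕ Fin 2)) (hS : S.card = 3)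
      (hn : (S.filter fun x => x.isLeft = false).card = n),
      (conf3 (theta m)).Reachable ⟨S, hS⟩ ⟨Cset m hm, Cset_card m hm⟩ := by
  intro n
  induction n with
  | zero =>
    intro S hS hn
    have hleft : ∀ x ∈ S, x.isLeft = true := by
      rw [Finset.card_eq_zero, Finset.filter_eq_empty_iff] at hn
      intro x hx
      simpa using hn hx
    exact left_to_canonical m hm _ S hS hleft rfl
  | succ n ih =>
    intro S hS hn
    obtain ⟨r, hr⟩ : (S.filter fun x => x.isLeft = false).Nonempty := by
      rw [← Finset.card_pos, hn]; omega
    rw [Finset.mem_filter] at hr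
    -- find a free left vertex
    have hLcard : ((Finset.univ : Finset (Fin m)).image Sum.inl
        \ S).Nonempty := by
      rw [← Finset.card_pos]
      have hIm : ((Finset.univ : Finset (Fin m)).image
          (Sum.inl : Fin m → Fin m ⊕ Fin 2)).card = m := by
        rw [Finset.card_image_of_injective _ Sum.inl_injective, Finset.card_univ,
          Fintype.card_fin]
      have hsub : ((Finset.univ : Finset (Fin m)).image Sum.inl) ∩ S ⊆ S.erase r := by
        intro x hx
        rw [Finset.mem_inter] at hx
        refine Finset.mem_erase.mpr ⟨?_, hx.2⟩
        rintro rfl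
        obtain ⟨i, _, hi⟩ := Finset.mem_image.mp hx.1
        rw [← hi] at hr
        simp at hr
      have h3 := Finset.card_le_card hsub
      rw [Finset.card_erase_of_mem hr.1, hS] at h3
      have h4 := Finset.card_sdiff_add_card_inter
        ((Finset.univ : Finset (Fin m)).image Sum.inl) S
      omega
    obtain ⟨v, hv⟩ := hLcard
    rw [Finset.mem_sdiff] at hv
    obtain ⟨i, _, hi⟩ := Finset.mem_image.mp hv.1
    have hvleft : v.isLeft = true := by rw [← hi]; rfl
    have hadj : (theta m).Adj r v := by
      simp [theta, hr.2, hvleft]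
    have step := move hS hr.1 hv.2 hadj
    have hn' : ((insert v (S.erase r)).filter fun x => x.isLeft = false).card = n := by
      rw [Finset.filter_insert, if_neg (by simp [hvleft]), Finset.filter_erase,
        Finset.card_erase_of_mem (Finset.mem_filter.mpr hr), hn]
      omega
    exact step.reachable.trans (ih _ (card_move hS hr.1 hv.2) hn')

end Conf3Aux

/-- For `m ≥ 3`, the 3-strand configuration graph of `Θ_m` is connected. -/
theorem conf3_theta_connected (m : ℕ) (hm : 3 ≤ m) : (conf3 (theta m)).Connected := by
  rw [SimpleGraph.connected_iff]
  refine ⟨fun S T => ?_, ⟨⟨Conf3Aux.Cset m hm, Conf3Aux.Cset_card m hm⟩⟩⟩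
  obtain ⟨S, hS⟩ := S
  obtain ⟨T, hT⟩ := T
  exact (Conf3Aux.to_canonical m hm _ S hS rfl).trans
    (Conf3Aux.to_canonical m hm _ T hT rfl).symm
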